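/- Let τ ∈ T_F and let M be a nonzero submodule of the principal series module I_τ over the Hecke algebra H_{W} of an infinite Coxeter group W (acting via the H_w). Then M is infinite dimensional over F. Consequently, no nonzero finite dimensional H-module embeds into any I_τ. -/

import Mathlib

open Function Set List CoxeterSystem

namespace Stmt15Aux

variable {B W : Type*} [Group W] {M : CoxeterMatrix B} (cs : CoxeterSystem M W)

local prefix:100 "s" => cs.simple
local prefix:100 "π" => cs.wordProd
local prefix:100 "ℓ" => cs.length
local prefix:100 "ris" => cs.rightInvSeq
local prefix:100 "lis" => cs.leftInvSeq

noncomputable section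
open Classical

/-- The basic involution used for the reflection cocycle. -/
def emapFun (i : B) : W × ℤˣ → W × ℤˣ :=
  fun p => (s i * p.1 * s i, if p.1 = s i then -p.2 else p.2)

lemma emapFun_involutive (i : B) : Function.Involutive (emapFun cs i) := by
  intro ⟨t, ε⟩
  have h : s i * s i = 1 := cs.simple_mul_simple_self i
  have h1 : s i * (s i * t * s i) * s i = t := by
    calc s i * (s i * t * s i) * s i = (s i * s i) * t * (s i * s i) := by group
    _ = t := by rw [h]; group
  have h2 : (s i * t * s i = s i) ↔ (t = s i) := by
    constructor
    · intro he
      have h3 : s i * (s i * t * s i) * s i = s i * s i * s i := by rw [he]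
      rw [h1] at h3
      rw [h3, h, one_mul]
    · rintro rfl
      rw [h, one_mul]
  simp only [emapFun, h1, h2]
  by_cases ht : t = s i <;> simp [ht]

def emap (i : B) : Equiv.Perm (W × ℤˣ) := (emapFun_involutive cs i).toPerm

lemma emap_apply (i : B) (t : W) (ε : ℤˣ) :
    emap cs i (t, ε) = (s i * t * s i, if t = s i then -ε else ε) := rfl

/-- sign of t relative to a word -/
def wsgn (ω : List B) (t : W) : ℤˣ :=
  ((ris ω).map (fun z => if z = t then (-1 : ℤˣ) else 1)).prod

lemma wsgn_nil (t : W) : wsgn cs [] t = 1 := rfl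

lemma ris_cons (i : B) (ω : List B) :
    ris (i :: ω) = ((π ω)⁻¹ * s i * π ω) :: ris ω := rfl

lemma wsgn_cons (i : B) (ω : List B) (t : W) :
    wsgn cs (i :: ω) t =
      (if (π ω)⁻¹ * s i * π ω = t then (-1:ℤˣ) else 1) * wsgn cs ω t := by
  simp [wsgn, ris_cons]

lemma prod_emap_apply (ω : List B) (t : W) (ε : ℤˣ) :
    ((ω.map (emap cs)).prod) (t, ε) = (π ω * t * (π ω)⁻¹, ε * wsgn cs ω t) := by
  induction ω generalizing t ε with
  | nil => simp [wsgn_nil]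
  | cons i ω ih =>
    rw [List.map_cons, List.prod_cons, Equiv.Perm.mul_apply, ih, emap_apply, wsgn_cons]
    have hcond : (π ω * t * (π ω)⁻¹ = s i) ↔ ((π ω)⁻¹ * s i * π ω = t) := by
      constructor
      · intro h; rw [← h]; group
      · intro h; rw [← h]; group
    rw [Prod.mk.injEq]
    constructor
    · rw [cs.wordProd_cons, mul_inv_rev, cs.inv_simple]; group
    · by_cases hc : (π ω)⁻¹ * s i * π ω = t
      · rw [if_pos (hcond.mpr hc), if_pos hc, neg_one_mul, mul_neg]
      · rw [if_neg (fun hh => hc (hcond.mp hh)), if_neg hc, one_mul]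

lemma pow_mul_emap (i j : B) (m : ℕ) :
    (emap cs i * emap cs j) ^ m = ((alternatingWord i j (2*m)).map (emap cs)).prod := by
  induction m with
  | zero => simp [alternatingWord]
  | succ m ih =>
    have h1 : 2 * (m+1) = (2*m+1) + 1 := by ring
    rw [h1, alternatingWord_succ', alternatingWord_succ']
    have he : ¬ Even (2*m+1) := by simp [Nat.even_add_one, parity_simps]
    have he2 : Even (2*m) := even_two_mul m
    rw [if_neg he, if_pos he2]
    rw [List.map_cons, List.map_cons, List.prod_cons, List.prod_cons, pow_succ', ih, mul_assoc]

/-- The inversion sequence of an alternating word: explicit dihedral formula. -/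
lemma ris_alternatingWord (i j : B) (n : ℕ) :
    ris (alternatingWord i j n) =
      ((List.range n).reverse).map (fun r => (s j * s i) ^ r * s j) := by
  induction n with
  | zero => simp [alternatingWord]
  | succ n ih =>
    rw [alternatingWord_succ', ris_cons,
      List.range_succ, List.reverse_append, List.reverse_singleton, List.singleton_append,
      List.map_cons, ih]
    congr 1
    -- head identity
    have hsemi : ∀ a : ℕ, s j * (s i * s j)^a = (s j * s i)^a * s j := by
      intro a
      have h : SemiconjBy (s j) (s i * s j) (s j * s i) := by
        unfold SemiconjBy; group
      exact (h.pow_right a).eq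
    have hinv : ∀ a : ℕ, ((s i * s j)^a)⁻¹ = (s j * s i)^a := by
      intro a
      rw [← inv_pow, mul_inv_rev, cs.inv_simple, cs.inv_simple]
    rcases Nat.even_or_odd n with he | ho
    · obtain ⟨a, ha⟩ := he
      obtain rfl : n = 2*a := by omega
      rw [if_pos (even_two_mul a)]
      have hp : π (alternatingWord i j (2*a)) = (s i * s j)^a := by
        rw [cs.prod_alternatingWord_eq_mul_pow, if_pos (even_two_mul a)]
        rw [Nat.mul_div_cancel_left a (by norm_num), one_mul]
      rw [hp, hinv]
      calc (s j * s i)^a * s j * (s i * s j)^a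
          = (s j * s i)^a * (s j * (s i * s j)^a) := by group
        _ = (s j * s i)^a * ((s j * s i)^a * s j) := by rw [hsemi]
        _ = (s j * s i)^(2*a) * s j := by
              rw [← mul_assoc, ← pow_add, two_mul]
    · obtain ⟨a, ha⟩ := ho
      obtain rfl : n = 2*a+1 := by omega
      rw [if_neg (by simp [Nat.even_add_one, parity_simps])]
      have hp : π (alternatingWord i j (2*a+1)) = s j * (s i * s j)^a := by
        rw [cs.prod_alternatingWord_eq_mul_pow,
          if_neg (by simp [Nat.even_add_one, parity_simps])]
        congr 2
        omega
      rw [hp, mul_inv_rev, hinv, cs.inv_simple]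
      calc (s j * s i)^a * s j * s i * (s j * (s i * s j)^a)
          = (s j * s i)^a * (s j * s i) * (s j * (s i * s j)^a) := by group
        _ = (s j * s i)^a * (s j * s i) * ((s j * s i)^a * s j) := by rw [hsemi]
        _ = (s j * s i)^(a + 1) * ((s j * s i)^a * s j) := by rw [← pow_succ]
        _ = (s j * s i)^(a + 1 + a) * s j := by rw [← mul_assoc, ← pow_add]
        _ = (s j * s i)^(2*a+1) * s j := by
              have : a + 1 + a = 2*a+1 := by omega
              rw [this]

lemma emap_liftable : CoxeterMatrix.IsLiftable M (emap cs) := by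
  intro i j
  rw [pow_mul_emap]
  apply Equiv.ext
  rintro ⟨t, ε⟩
  rw [prod_emap_apply]
  have hπ : π (alternatingWord i j (2 * M i j)) = 1 := by
    rw [cs.prod_alternatingWord_eq_mul_pow, if_pos (even_two_mul _), one_mul,
      Nat.mul_div_cancel_left _ (by norm_num), cs.simple_mul_simple_pow]
  have hsgn : wsgn cs (alternatingWord i j (2 * M i j)) t = 1 := by
    unfold wsgn
    rw [ris_alternatingWord, List.map_map, List.map_reverse, List.prod_reverse]
    have h2m : 2 * M i j = M i j + M i j := by ring
    rw [h2m, List.range_add, List.map_append, List.prod_append, List.map_map]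
    have hone : (s j * s i) ^ (M i j) = 1 := cs.simple_mul_simple_pow' i j
    have hmapeq :
        List.map (((fun z => if z = t then (-1:ℤˣ) else 1) ∘
            (fun r => (s j * s i) ^ r * s j)) ∘ (fun x => M i j + x)) (List.range (M i j)) =
        List.map ((fun z => if z = t then (-1:ℤˣ) else 1) ∘
            (fun r => (s j * s i) ^ r * s j)) (List.range (M i j)) := by
      apply List.map_congr_left
      intro r _
      simp only [Function.comp_apply, pow_add, hone, one_mul]
    rw [hmapeq, Int.units_mul_self]
  rw [hπ, hsgn]
  simp

/-- The reflection cocycle homomorphism. -/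
def mu : W →* Equiv.Perm (W × ℤˣ) := cs.lift ⟨emap cs, emap_liftable cs⟩

lemma mu_wordProd (ω : List B) : mu cs (π ω) = ((ω.map (emap cs)).prod) := by
  unfold CoxeterSystem.wordProd
  rw [map_list_prod, List.map_map]
  congr 1
  apply List.map_congr_left
  intro i _
  exact cs.lift_apply_simple (emap_liftable cs) i

/-- η w t : the sign of t in (any word for) w. -/
def eta (w t : W) : ℤˣ := ((mu cs w) (t, 1)).2

lemma eta_eq_wsgn (ω : List B) (t : W) : eta cs (π ω) t = wsgn cs ω t := by
  unfold eta
  rw [mu_wordProd, prod_emap_apply]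
  simp

lemma mu_apply (w t : W) (ε : ℤˣ) : mu cs w (t, ε) = (w * t * w⁻¹, ε * eta cs w t) := by
  obtain ⟨ω, rfl⟩ := cs.wordProd_surjective w
  rw [mu_wordProd, prod_emap_apply, eta_eq_wsgn]

lemma eta_mul (u v t : W) : eta cs (u * v) t = eta cs v t * eta cs u (v * t * v⁻¹) := by
  have h1 : mu cs (u * v) (t, 1) = mu cs u (mu cs v (t, 1)) := by
    rw [map_mul]; rfl
  rw [mu_apply, mu_apply, mu_apply] at h1
  have := congrArg Prod.snd h1
  simpa using this

lemma eta_one (t : W) : eta cs 1 t = 1 := by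
  unfold eta; rw [map_one]; rfl

lemma eta_simple (i : B) : eta cs (s i) (s i) = -1 := by
  unfold eta mu
  rw [cs.lift_apply_simple (emap_liftable cs) i, emap_apply, if_pos rfl]

lemma eta_refl {t : W} (ht : cs.IsReflection t) : eta cs t t = -1 := by
  obtain ⟨w, i, rfl⟩ := ht
  have hss : s i * s i = 1 := cs.simple_mul_simple_self i
  have hinv1 : eta cs w⁻¹ (w * s i * w⁻¹) * eta cs w (s i) = 1 := by
    have hkey := eta_mul cs w w⁻¹ (w * s i * w⁻¹)
    rw [mul_inv_cancel, eta_one] at hkey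
    have hc : w⁻¹ * (w * s i * w⁻¹) * w⁻¹⁻¹ = s i := by group
    rw [hc] at hkey
    exact hkey.symm
  have h2 : eta cs (w * s i * w⁻¹) (w * s i * w⁻¹) =
      eta cs (w * (s i * w⁻¹)) (w * s i * w⁻¹) := by rw [mul_assoc]
  have h3 : (s i * w⁻¹) * (w * s i * w⁻¹) * (s i * w⁻¹)⁻¹ = s i := by
    rw [mul_inv_rev, inv_inv, cs.inv_simple]
    calc (s i * w⁻¹) * (w * s i * w⁻¹) * (w * s i)
        = s i * (w⁻¹ * w) * s i * (w⁻¹ * w) * s i := by group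
      _ = s i * s i * s i := by rw [inv_mul_cancel, mul_one, mul_one]
      _ = s i := by rw [hss, one_mul]
  have h5 : w⁻¹ * (w * s i * w⁻¹) * w⁻¹⁻¹ = s i := by group
  rw [h2, eta_mul, h3, eta_mul, h5, eta_simple]
  calc eta cs w⁻¹ (w * s i * w⁻¹) * -1 * eta cs w (s i)
      = -1 * (eta cs w⁻¹ (w * s i * w⁻¹) * eta cs w (s i)) := by
        simp [mul_comm, mul_left_comm, mul_assoc]
    _ = -1 := by rw [hinv1, mul_one]

lemma prod_ite_one {l : List W} {t : W} (ht : t ∉ l) :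
    (l.map (fun z => if z = t then (-1:ℤˣ) else 1)).prod = 1 := by
  induction l with
  | nil => rfl
  | cons a l ih =>
    have hne : ¬ (a = t) := by
      intro h
      exact ht (by rw [← h]; exact List.mem_cons_self)
    rw [List.map_cons, List.prod_cons, if_neg hne,
      one_mul, ih (fun h => ht (List.mem_cons_of_mem a h))]

lemma prod_ite_neg_one {l : List W} (hn : l.Nodup) {t : W} (ht : t ∈ l) :
    (l.map (fun z => if z = t then (-1:ℤˣ) else 1)).prod = -1 := by
  induction l with
  | nil => exact absurd ht List.not_mem_nil
  | cons a l ih =>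
    rw [List.map_cons, List.prod_cons]
    rcases List.mem_cons.mp ht with rfl | hmem
    · rw [if_pos rfl, prod_ite_one (List.nodup_cons.mp hn).1]
      rfl
    · have hne : a ≠ t := fun h => (List.nodup_cons.mp hn).1 (h ▸ hmem)
      rw [if_neg hne, one_mul, ih (List.nodup_cons.mp hn).2 hmem]

lemma mem_of_wsgn_neg_one {ω : List B} {t : W} (h : wsgn cs ω t = -1) : t ∈ ris ω := by
  by_contra hmem
  rw [wsgn, prod_ite_one hmem] at h
  exact absurd h (by decide)

lemma wsgn_of_mem {ω : List B} (hr : cs.IsReduced ω) {t : W} (ht : t ∈ ris ω) :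
    wsgn cs ω t = -1 :=
  prod_ite_neg_one hr.nodup_rightInvSeq ht

lemma eta_neg_one_of_lt {w t : W} (ht : cs.IsReflection t) (hlt : ℓ (w * t) < ℓ w) :
    eta cs w t = -1 := by
  have hu : (w * t) * t = w := by rw [mul_assoc, ht.mul_self, mul_one]
  have h1 : eta cs w t = eta cs t t * eta cs (w * t) t := by
    have h2 := eta_mul cs (w * t) t t
    rw [hu] at h2
    rw [h2, ht.mul_self, one_mul, ht.inv]
  have h3 : eta cs (w * t) t = 1 := by
    rcases Int.units_eq_one_or (eta cs (w * t) t) with h | h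
    · exact h
    · exfalso
      obtain ⟨ω, hωr, hω⟩ := cs.exists_reduced_word' (w * t)
      have h4 : wsgn cs ω t = -1 := by rw [← eta_eq_wsgn, ← hω, h]
      have h5 := (cs.isRightInversion_of_mem_rightInvSeq hωr (mem_of_wsgn_neg_one cs h4)).2
      rw [← hω] at h5
      rw [hu] at h5
      omega
  rw [h1, h3, mul_one, eta_refl cs ht]

lemma exchange_right {w t : W} (ht : cs.IsReflection t) (hlt : ℓ (w * t) < ℓ w)
    (ω : List B) (hω : π ω = w) : t ∈ ris ω := by
  apply mem_of_wsgn_neg_one cs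
  rw [← eta_eq_wsgn, hω]
  exact eta_neg_one_of_lt cs ht hlt

lemma exchange_left {w t : W} (ht : cs.IsReflection t) (hlt : ℓ (t * w) < ℓ w)
    (ω : List B) (hω : π ω = w) : t ∈ lis ω := by
  have h1 : ℓ (w⁻¹ * t) < ℓ w⁻¹ := by
    have : w⁻¹ * t = (t * w)⁻¹ := by rw [mul_inv_rev, ht.inv]
    rw [this, cs.length_inv, cs.length_inv]
    exact hlt
  have h2 : π (ω.reverse) = w⁻¹ := by rw [cs.wordProd_reverse, hω]
  have h3 := exchange_right cs ht h1 ω.reverse h2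
  rw [cs.rightInvSeq_reverse, List.mem_reverse] at h3
  exact h3

lemma lis_cons (i : B) (ω : List B) :
    lis (i :: ω) = s i :: (lis ω).map (MulAut.conj (s i)) := rfl

lemma lis_append (ω₁ ω₂ : List B) :
    lis (ω₁ ++ ω₂) = lis ω₁ ++ (lis ω₂).map (fun t => π ω₁ * t * (π ω₁)⁻¹) := by
  induction ω₁ with
  | nil =>
    simp only [List.nil_append, CoxeterSystem.leftInvSeq_nil, cs.wordProd_nil, one_mul, inv_one,
      mul_one]
    simp
  | cons i ω₁ ih =>
    rw [List.cons_append, lis_cons, lis_cons, ih, List.map_append, List.cons_append,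
      List.map_map]
    congr 2
    apply List.map_congr_left
    intro x _
    simp only [Function.comp_apply, MulAut.conj_apply, cs.wordProd_cons, mul_inv_rev]
    group

theorem exists_ascent [Infinite W] (w : W) : ∃ i : B, ℓ (s i * w) = ℓ w + 1 := by
  by_contra hcon
  push_neg at hcon
  have hdesc : ∀ i : B, cs.IsLeftDescent w i := by
    intro i
    rcases cs.length_simple_mul w i with h1 | h2
    · exact absurd h1 (hcon i)
    · unfold CoxeterSystem.IsLeftDescent
      omega
  have key : ∀ n : ℕ, ∀ v : W, ℓ v = n → ℓ (v * w) + n = ℓ w := by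
    intro n
    induction n with
    | zero =>
      intro v hv
      rw [cs.length_eq_zero_iff.mp hv, one_mul, add_zero]
    | succ n ih =>
      intro v hv
      have hvne : v ≠ 1 := by
        intro h1
        rw [h1, cs.length_one] at hv
        omega
      obtain ⟨i, hdi⟩ := cs.exists_rightDescent_of_ne_one hvne
      have hdi' := (cs.isRightDescent_iff).mp hdi
      have hv' : ℓ (v * s i) = n := by omega
      obtain ⟨ω₁, hω₁r, hω₁⟩ := cs.exists_reduced_word' (v * s i)⁻¹
      obtain ⟨ω₂, hω₂r, hω₂⟩ := cs.exists_reduced_word' ((v * s i) * w)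
      have hπ : π (ω₁ ++ ω₂) = w := by
        rw [cs.wordProd_append, ← hω₁, ← hω₂]
        group
      have hmem : s i ∈ lis (ω₁ ++ ω₂) :=
        exchange_left cs (cs.isReflection_simple i) (hdesc i) _ hπ
      rw [lis_append] at hmem
      rcases List.mem_append.mp hmem with hm1 | hm2
      · exfalso
        have hinv := cs.isLeftInversion_of_mem_leftInvSeq hω₁r hm1
        have h6 : ℓ (s i * π ω₁) < ℓ (π ω₁) := hinv.2
        have h7 : s i * π ω₁ = v⁻¹ := by
          rw [← hω₁, mul_inv_rev, cs.inv_simple, ← mul_assoc, cs.simple_mul_simple_self, one_mul]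
        rw [h7, ← hω₁, cs.length_inv, cs.length_inv] at h6
        omega
      · obtain ⟨y, hy_mem, hy_eq⟩ := List.mem_map.mp hm2
        have hyinv := cs.isLeftInversion_of_mem_leftInvSeq hω₂r hy_mem
        have hy : y = (v * s i) * s i * (v * s i)⁻¹ := by
          have : y = (π ω₁)⁻¹ * s i * π ω₁ := by
            rw [← hy_eq]; group
          rw [this, ← hω₁, inv_inv]
        have hvw : v * w = y * ((v * s i) * w) := by
          rw [hy]
          have hss : s i * s i = 1 := cs.simple_mul_simple_self i
          calc v * w = v * (s i * s i) * w := by rw [hss, mul_one]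
            _ = (v * s i) * s i * ((v * s i)⁻¹ * (v * s i)) * w := by
                  rw [inv_mul_cancel, mul_one]; group
            _ = (v * s i) * s i * (v * s i)⁻¹ * ((v * s i) * w) := by group
        have hlt : ℓ (v * w) < ℓ ((v * s i) * w) := by
          rw [hvw, hω₂]
          exact hyinv.2
        have hge := cs.length_mul_ge_length_sub_length' v w
        have hia := ih (v * s i) hv'
        omega
  have hbound : ∀ v : W, ℓ v ≤ ℓ w := by
    intro v
    have := key (ℓ v) v rfl
    omega
  obtain ⟨ω₀, hω₀r, hω₀⟩ := cs.exists_reduced_word' w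
  have hsimple_mem : ∀ i : B, s i ∈ lis ω₀ :=
    fun i => exchange_left cs (cs.isReflection_simple i) (hdesc i) ω₀ hω₀.symm
  have hSfin : {x : W | x ∈ lis ω₀}.Finite := (lis ω₀).finite_toSet
  have hstep : ∀ k : ℕ, {v : W | ℓ v ≤ k}.Finite := by
    intro k
    induction k with
    | zero =>
      apply Set.Finite.subset (Set.finite_singleton (1 : W))
      intro v hv
      simp only [Set.mem_setOf_eq, Nat.le_zero] at hv
      simp [cs.length_eq_zero_iff.mp hv]
    | succ k ih =>
      have hsub : {v : W | ℓ v ≤ k+1} ⊆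
          {v : W | ℓ v ≤ k} ∪ ⋃ x ∈ {x : W | x ∈ lis ω₀}, (fun y => x * y) '' {v : W | ℓ v ≤ k} := by
        intro v hv
        simp only [Set.mem_setOf_eq] at hv
        by_cases hvk : ℓ v ≤ k
        · exact Or.inl hvk
        · right
          have hvn : ℓ v = k + 1 := by omega
          have hvne : v ≠ 1 := by
            intro h1
            rw [h1, cs.length_one] at hvn
            omega
          obtain ⟨i, hdi⟩ := cs.exists_leftDescent_of_ne_one hvne
          have hdi' := (cs.isLeftDescent_iff).mp hdi
          rw [Set.mem_iUnion₂]
          refine ⟨s i, hsimple_mem i, ⟨s i * v, by simp only [Set.mem_setOf_eq]; omega, ?_⟩⟩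
          show s i * (s i * v) = v
          exact cs.simple_mul_simple_cancel_left i
      exact Set.Finite.subset (ih.union (hSfin.biUnion (fun x _ => ih.image _))) hsub
  have huniv : (Set.univ : Set W).Finite :=
    (hstep (ℓ w)).subset (fun v _ => hbound v)
  exact Set.infinite_univ huniv

end

section Algebra

variable {F : Type*} [Field F] {Y : Type*} [AddCommGroup Y] (act : W →* Multiplicative (AddAut Y))
  {H : Type*} [Ring H] [Algebra F H]
  (σ : B → Fˣ) (Z : Y → H) (T : W → H)

/-- Span of low-length `Z μ * T u`. -/
def Vlt (n : ℕ) : Submodule F H :=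
  Submodule.span F {x : H | ∃ (mu : Y) (u : W), cs.length u < n ∧ x = Z mu * T u}

lemma Vlt_mono {n m : ℕ} (h : n ≤ m) : Vlt (F := F) cs Z T n ≤ Vlt (F := F) cs Z T m := by
  apply Submodule.span_mono
  rintro x ⟨mu, u, hu, rfl⟩
  exact ⟨mu, u, lt_of_lt_of_le hu h, rfl⟩

lemma ZT_mem_Vlt {n : ℕ} (mu : Y) {u : W} (hu : cs.length u < n) :
    Z mu * T u ∈ Vlt (F := F) cs Z T n :=
  Submodule.subset_span ⟨mu, u, hu, rfl⟩

lemma spanZ_mul_T_mem {D : H} (hD : D ∈ Submodule.span F (Set.range Z))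
    {n : ℕ} {u : W} (hu : cs.length u < n) : D * T u ∈ Vlt (F := F) cs Z T n := by
  induction hD using Submodule.span_induction with
  | mem x hx =>
    obtain ⟨mu, rfl⟩ := hx
    exact ZT_mem_Vlt cs Z T mu hu
  | zero => rw [zero_mul]; exact zero_mem _
  | add x y _ _ hx hy => rw [add_mul]; exact add_mem hx hy
  | smul c x _ hx => rw [smul_mul_assoc]; exact Submodule.smul_mem _ c hx

variable (hBL2 : ∀ (i : B) (w : W), T (cs.simple i) * T w =
      if cs.length (cs.simple i * w) = cs.length w + 1 then T (cs.simple i * w)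
      else ((σ i : F) - (↑(σ i)⁻¹ : F)) • T w + T (cs.simple i * w))
  (hBL4 : ∀ (i : B) (lam : Y),
      T (cs.simple i) * Z lam - Z (Multiplicative.toAdd (act (cs.simple i)) lam) * T (cs.simple i)
        ∈ Submodule.span F (Set.range Z))

include hBL2 hBL4 in
lemma Ts_mul_Vlt {i : B} {n : ℕ} {x : H} (hx : x ∈ Vlt (F := F) cs Z T n) :
    T (cs.simple i) * x ∈ Vlt (F := F) cs Z T (n + 1) := by
  induction hx using Submodule.span_induction with
  | mem x hx =>
    obtain ⟨mu, u, hu, rfl⟩ := hx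
    have hD := hBL4 i mu
    set D := T (cs.simple i) * Z mu - Z (Multiplicative.toAdd (act (cs.simple i)) mu) * T (cs.simple i) with hDdef
    have hTZ : T (cs.simple i) * Z mu = Z (Multiplicative.toAdd (act (cs.simple i)) mu) * T (cs.simple i) + D := by
      rw [hDdef]; noncomm_ring
    have key : T (cs.simple i) * (Z mu * T u) =
        Z (Multiplicative.toAdd (act (cs.simple i)) mu) * (T (cs.simple i) * T u) + D * T u := by
      rw [← mul_assoc, hTZ]; noncomm_ring
    rw [key]
    have hsu : cs.length (cs.simple i * u) < n + 1 := by
      rcases cs.length_simple_mul u i with h | h <;> omega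
    have h2 : Z (Multiplicative.toAdd (act (cs.simple i)) mu) * (T (cs.simple i) * T u) ∈ Vlt (F := F) cs Z T (n+1) := by
      rw [hBL2 i u]
      by_cases hc : cs.length (cs.simple i * u) = cs.length u + 1
      · rw [if_pos hc]
        exact ZT_mem_Vlt cs Z T _ hsu
      · rw [if_neg hc, mul_add, mul_smul_comm]
        exact add_mem (Submodule.smul_mem _ _ (ZT_mem_Vlt cs Z T _ (by omega)))
          (ZT_mem_Vlt cs Z T _ hsu)
    exact add_mem h2 (spanZ_mul_T_mem cs Z T hD (by omega))
  | zero => rw [mul_zero]; exact zero_mem _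
  | add x y _ _ hx hy => rw [mul_add]; exact add_mem hx hy
  | smul c x _ hx => rw [mul_smul_comm]; exact Submodule.smul_mem _ c hx

variable (hT1 : T 1 = 1)

include hBL2 hBL4 hT1 in
lemma lemA : ∀ (n : ℕ) (w : W), cs.length w = n → ∀ lam : Y,
    T w * Z lam - Z (Multiplicative.toAdd (act w) lam) * T w ∈ Vlt (F := F) cs Z T n := by
  intro n
  induction n with
  | zero =>
    intro w hw lam
    rw [cs.length_eq_zero_iff.mp hw, hT1, map_one, toAdd_one, AddAut.zero_apply, one_mul, mul_one, sub_self]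
    exact zero_mem _
  | succ n ih =>
    intro w hw lam
    have hwne : w ≠ 1 := by
      intro h1
      rw [h1, cs.length_one] at hw
      omega
    obtain ⟨i, hdi⟩ := cs.exists_leftDescent_of_ne_one hwne
    have hdi' := (cs.isLeftDescent_iff).mp hdi
    obtain ⟨w', hw'⟩ : ∃ w', w = cs.simple i * w' :=
      ⟨cs.simple i * w, (cs.simple_mul_simple_cancel_left i).symm⟩
    subst hw'
    rw [cs.simple_mul_simple_cancel_left] at hdi'
    have hlw' : cs.length w' = n := by omega
    have hTw : T (cs.simple i * w') = T (cs.simple i) * T w' := by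
      rw [hBL2 i w', if_pos (by omega)]
    have hE : T w' * Z lam - Z (Multiplicative.toAdd (act w') lam) * T w' ∈ Vlt (F := F) cs Z T n := ih w' hlw' lam
    have hD := hBL4 i (Multiplicative.toAdd (act w') lam)
    have hact : Multiplicative.toAdd (act (cs.simple i)) (Multiplicative.toAdd (act w') lam) = Multiplicative.toAdd (act (cs.simple i * w')) lam := by
      rw [map_mul, toAdd_mul, AddAut.add_apply]
    rw [hact] at hD
    have key : T (cs.simple i * w') * Z lam
          - Z (Multiplicative.toAdd (act (cs.simple i * w')) lam) * T (cs.simple i * w') =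
        (T (cs.simple i) * Z (Multiplicative.toAdd (act w') lam) - Z (Multiplicative.toAdd (act (cs.simple i * w')) lam) * T (cs.simple i))
            * T w'
          + T (cs.simple i) * (T w' * Z lam - Z (Multiplicative.toAdd (act w') lam) * T w') := by
      rw [hTw]
      noncomm_ring
    rw [key]
    exact add_mem (spanZ_mul_T_mem cs Z T hD (by omega))
      (Ts_mul_Vlt cs act σ Z T hBL2 hBL4 hE)

variable (hBL3 : ∀ lam mu : Y, Z lam * Z mu = Z (lam + mu)) (hZ0 : Z 0 = 1)
variable (hind : LinearIndependent F (fun p : Y × W => Z p.1 * T p.2))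
  (hspan : Submodule.span F (Set.range fun p : Y × W => Z p.1 * T p.2) = ⊤)

/-- The PBW basis `Z λ * T w`. -/
noncomputable def bZT : Module.Basis (Y × W) F H := Module.Basis.mk hind (by rw [hspan])

lemma bZT_apply (p : Y × W) : bZT Z T hind hspan p = Z p.1 * T p.2 := Module.Basis.mk_apply _ _ _

include hind hspan in
lemma repr_Vlt_eq_zero {n : ℕ} {x : H} (hx : x ∈ Vlt (F := F) cs Z T n) {mu : Y} {u : W}
    (hu : n ≤ cs.length u) : (bZT Z T hind hspan).repr x (mu, u) = 0 := by
  classical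
  induction hx using Submodule.span_induction with
  | mem x hx =>
    obtain ⟨mu', u', hu', rfl⟩ := hx
    rw [← bZT_apply Z T hind hspan (mu', u'), Module.Basis.repr_self, Finsupp.single_apply]
    rw [if_neg]
    intro h
    rw [Prod.mk.injEq] at h
    rw [h.2] at hu'
    omega
  | zero => rw [map_zero]; rfl
  | add x y _ _ hx hy => rw [map_add, Finsupp.add_apply, hx, hy, add_zero]
  | smul c x _ hx => rw [map_smul, Finsupp.smul_apply, hx, smul_zero]

include hBL2 hBL4 hT1 hspan in
lemma lemB : Submodule.span F (Set.range fun p : Y × W => T p.2 * Z p.1) = ⊤ := by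
  set K := Submodule.span F (Set.range fun p : Y × W => T p.2 * Z p.1) with hK
  have claim : ∀ n : ℕ, ∀ w : W, cs.length w < n → ∀ lam : Y, Z lam * T w ∈ K := by
    intro n
    induction n with
    | zero => omega
    | succ n ih =>
      intro w hw lam
      by_cases hn : cs.length w < n
      · exact ih w hn lam
      · have hVK : Vlt (F := F) cs Z T (cs.length w) ≤ K := by
          apply Submodule.span_le.mpr
          rintro x ⟨mu', u', hu', rfl⟩
          exact ih u' (by omega) mu'
        have key := lemA cs act σ Z T hBL2 hBL4 hT1 (cs.length w) w rfl ((-Multiplicative.toAdd (act w)) lam)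
        have hactinv : Multiplicative.toAdd (act w) ((-Multiplicative.toAdd (act w)) lam) = lam := by simp
        rw [hactinv] at key
        have hmem : T w * Z ((-Multiplicative.toAdd (act w)) lam) ∈ K :=
          Submodule.subset_span ⟨((-Multiplicative.toAdd (act w)) lam, w), rfl⟩
        have : Z lam * T w = T w * Z ((-Multiplicative.toAdd (act w)) lam)
            - (T w * Z ((-Multiplicative.toAdd (act w)) lam) - Z lam * T w) := by noncomm_ring
        rw [this]
        exact sub_mem hmem (hVK key)
  rw [eq_top_iff, ← hspan]
  apply Submodule.span_le.mpr
  rintro x ⟨p, rfl⟩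
  exact claim (cs.length p.2 + 1) p.2 (by omega) p.1

include hBL2 hBL4 hT1 hind hspan in
lemma lemInd : LinearIndependent F (fun p : Y × W => T p.2 * Z p.1) := by
  classical
  rw [linearIndependent_iff]
  intro l hl
  by_contra hlne
  have hsupp : l.support.Nonempty := Finsupp.support_nonempty_iff.mpr hlne
  obtain ⟨p₀, hp₀mem, hp₀⟩ := Finset.exists_mem_eq_sup l.support hsupp (fun p => cs.length p.2)
  set n := l.support.sup (fun p => cs.length p.2) with hn
  set b := bZT Z T hind hspan with hb
  set q : Y × W → Y × W := fun p => (Multiplicative.toAdd (act p.2) p.1, p.2) with hq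
  set e : Y × W → H := fun p => T p.2 * Z p.1 - Z (Multiplicative.toAdd (act p.2) p.1) * T p.2 with he
  have hsplit : ∀ p : Y × W, T p.2 * Z p.1 = b (q p) + e p := by
    intro p
    rw [hb, bZT_apply Z T hind hspan, he, hq]
    noncomm_ring
  have htot : (0 : H) = (∑ p ∈ l.support, l p • b (q p)) + ∑ p ∈ l.support, l p • e p := by
    rw [← Finset.sum_add_distrib]
    rw [← hl, Finsupp.linearCombination_apply, Finsupp.sum]
    apply Finset.sum_congr rfl
    intro p _
    rw [hsplit p, smul_add]
  have hemem : (∑ p ∈ l.support, l p • e p) ∈ Vlt (F := F) cs Z T n := by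
    apply Submodule.sum_mem
    intro p hp
    apply Submodule.smul_mem
    have h1 := lemA cs act σ Z T hBL2 hBL4 hT1 (cs.length p.2) p.2 rfl p.1
    exact Vlt_mono cs Z T (Finset.le_sup (f := fun p : Y × W => cs.length p.2) hp) h1
  have h2 : b.repr (∑ p ∈ l.support, l p • e p) (q p₀) = 0 := by
    apply repr_Vlt_eq_zero cs Z T hind hspan hemem
    omega
  have h1 : b.repr (∑ p ∈ l.support, l p • b (q p)) (q p₀) = l p₀ := by
    rw [map_sum, Finsupp.finset_sum_apply]
    rw [Finset.sum_eq_single_of_mem p₀ hp₀mem]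
    · rw [map_smul, Module.Basis.repr_self, Finsupp.smul_apply, Finsupp.single_apply, if_pos rfl,
        smul_eq_mul, mul_one]
    · intro p hp hne
      rw [map_smul, Module.Basis.repr_self, Finsupp.smul_apply, Finsupp.single_apply, if_neg, smul_zero]
      intro hqq
      apply hne
      rw [hq, Prod.mk.injEq] at hqq
      have hp2 : p.2 = p₀.2 := hqq.2
      have hp1 : p.1 = p₀.1 := by
        apply (Multiplicative.toAdd (act p₀.2)).injective
        rw [← hqq.1, hp2]
      exact Prod.ext hp1 hp2
  have := congrArg (fun x => b.repr x (q p₀)) htot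
  simp only [map_zero, Finsupp.coe_zero, Pi.zero_apply, map_add, Finsupp.add_apply] at this
  rw [h1, h2, add_zero] at this
  exact (Finsupp.mem_support_iff.mp hp₀mem) this.symm

/-- The basis `T w * Z λ`. -/
noncomputable def bTZ : Module.Basis (Y × W) F H :=
  Module.Basis.mk (lemInd cs act σ Z T hBL2 hBL4 hT1 hind hspan)
    (by rw [lemB cs act σ Z T hBL2 hBL4 hT1 hspan])

lemma bTZ_apply (p : Y × W) :
    bTZ cs act σ Z T hBL2 hBL4 hT1 hind hspan p = T p.2 * Z p.1 := Module.Basis.mk_apply _ _ _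

variable (τ : Y → Fˣ) (hτ : ∀ lam mu : Y, τ (lam + mu) = τ lam * τ mu)

/-- The coordinate map giving `T w Z λ ↦ τ(λ) e_w`. -/
noncomputable def phi : H →ₗ[F] (W →₀ F) :=
  Module.Basis.constr (bTZ cs act σ Z T hBL2 hBL4 hT1 hind hspan) F
    (fun p => (τ p.1 : F) • Finsupp.single p.2 (1 : F))

lemma phi_TZ (p : Y × W) :
    phi cs act σ Z T hBL2 hBL4 hT1 hind hspan τ (T p.2 * Z p.1) =
      (τ p.1 : F) • Finsupp.single p.2 (1 : F) := by
  have h := Module.Basis.constr_basis (bTZ cs act σ Z T hBL2 hBL4 hT1 hind hspan) F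
    (fun p => (τ p.1 : F) • Finsupp.single p.2 (1 : F)) p
  rwa [bTZ_apply cs act σ Z T hBL2 hBL4 hT1 hind hspan] at h

include hBL2 hBL3 hBL4 hT1 hτ in
lemma phi_J {J : Submodule H H}
    (hJ : J = Submodule.span H {x : H | ∃ lam : Y, x = Z lam - (τ lam : F) • 1})
    {x : H} (hx : x ∈ J) :
    phi cs act σ Z T hBL2 hBL4 hT1 hind hspan τ x = 0 := by
  subst hJ
  suffices main : ∀ h : H, phi cs act σ Z T hBL2 hBL4 hT1 hind hspan τ (h * x) = 0 by
    have := main 1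
    rwa [one_mul] at this
  induction hx using Submodule.span_induction with
  | mem y hy =>
    obtain ⟨lam, rfl⟩ := hy
    intro h
    have hmem : h ∈ (⊤ : Submodule F H) := trivial
    rw [← lemB cs act σ Z T hBL2 hBL4 hT1 hspan] at hmem
    induction hmem using Submodule.span_induction with
    | mem g hg =>
      obtain ⟨p, rfl⟩ := hg
      have hexp : (T p.2 * Z p.1) * (Z lam - (τ lam : F) • 1) =
          T p.2 * Z (p.1 + lam) - (τ lam : F) • (T p.2 * Z p.1) := by
        rw [mul_sub, mul_assoc, hBL3, mul_smul_comm, mul_one]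
      rw [hexp, map_sub, map_smul,
        phi_TZ cs act σ Z T hBL2 hBL4 hT1 hind hspan τ (p.1 + lam, p.2),
        phi_TZ cs act σ Z T hBL2 hBL4 hT1 hind hspan τ p]
      show (τ (p.1 + lam) : F) • Finsupp.single p.2 (1:F)
          - (τ lam : F) • ((τ p.1 : F) • Finsupp.single p.2 (1:F)) = 0
      rw [hτ, Units.val_mul, smul_smul, mul_comm ((τ lam : F)) _, sub_self]
    | zero => rw [zero_mul, map_zero]
    | add a b _ _ ha hb => rw [add_mul, map_add, ha, hb, add_zero]
    | smul c a _ ha => rw [smul_mul_assoc, map_smul, ha, smul_zero]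
  | zero => intro h; rw [mul_zero, map_zero]
  | add a b _ _ ha hb => intro h; rw [mul_add, map_add, ha h, hb h, add_zero]
  | smul r y _ hy =>
    intro h
    rw [smul_eq_mul, ← mul_assoc]
    exact hy (h * r)

end Algebra

end Stmt15Aux

/-- If `W` is infinite, every nonzero subspace of the principal series `I_τ` stable under
the Hecke operators `H_w` is infinite dimensional over `F`; consequently no nonzero finite
dimensional `H`-module embeds into `I_τ`. -/
theorem stmt15 {F : Type*} [Field F] {B W : Type*} [Group W] [Infinite W]
    {M : CoxeterMatrix B} (cs : CoxeterSystem M W)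
    {Y : Type*} [AddCommGroup Y] (act : W →* Multiplicative (AddAut Y))
    {H : Type*} [Ring H] [Algebra F H]
    (σ : B → Fˣ) (Z : Y → H) (T : W → H)
    (hind : LinearIndependent F (fun p : Y × W => Z p.1 * T p.2))
    (hspan : Submodule.span F (Set.range fun p : Y × W => Z p.1 * T p.2) = ⊤)
    (hT1 : T 1 = 1) (hZ0 : Z 0 = 1)
    (hBL2 : ∀ (i : B) (w : W), T (cs.simple i) * T w =
      if cs.length (cs.simple i * w) = cs.length w + 1 then T (cs.simple i * w)
      else ((σ i : F) - (↑(σ i)⁻¹ : F)) • T w + T (cs.simple i * w))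
    (hBL3 : ∀ lam mu : Y, Z lam * Z mu = Z (lam + mu))
    (hBL4 : ∀ (i : B) (lam : Y),
      T (cs.simple i) * Z lam - Z (Multiplicative.toAdd (act (cs.simple i)) lam) * T (cs.simple i)
        ∈ Submodule.span F (Set.range Z))
    (τ : Y → Fˣ) (hτ : ∀ lam mu : Y, τ (lam + mu) = τ lam * τ mu)
    (J : Submodule H H)
    (hJ : J = Submodule.span H {x : H | ∃ lam : Y, x = Z lam - (τ lam : F) • 1}) :
    (∀ P : Submodule F (H ⧸ J), (∀ (w : W), ∀ x ∈ P, T w • x ∈ P) → P ≠ ⊥ →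
      ¬ Module.Finite F P) ∧
    (∀ (V : Type*) (_ : AddCommGroup V) (_ : Module H V) (_ : Module F V)
      (_ : IsScalarTower F H V), Module.Finite F V → Nontrivial V →
      ∀ f : V →ₗ[H] (H ⧸ J), ¬ Function.Injective f) := by
  classical
  -- τ 0 = 1
  have htau0 : ((τ 0 : Fˣ) : F) = 1 := by
    have h := hτ 0 0
    rw [add_zero] at h
    rw [left_eq_mul.mp h, Units.val_one]
  set PHI := Stmt15Aux.phi cs act σ Z T hBL2 hBL4 hT1 hind hspan τ with hPHI
  have hphiJ : ∀ x ∈ J, PHI x = 0 :=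
    fun x hx => Stmt15Aux.phi_J cs act σ Z T hBL2 hBL4 hT1 hBL3 hind hspan τ hτ hJ hx
  have hphiT : ∀ w : W, PHI (T w) = Finsupp.single w (1:F) := by
    intro w
    have h1 : T w = T w * Z 0 := by rw [hZ0, mul_one]
    rw [h1, hPHI, Stmt15Aux.phi_TZ cs act σ Z T hBL2 hBL4 hT1 hind hspan τ (0, w), htau0, one_smul]
  -- the residue classes of the T w
  set t : W → H ⧸ J := fun w => Submodule.Quotient.mk (T w) with ht
  have hmkF : ∀ (c : F) (x : H), (Submodule.Quotient.mk (c • x) : H ⧸ J) =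
      c • (Submodule.Quotient.mk x : H ⧸ J) := fun c x => Submodule.Quotient.mk_smul J c x
  have hindT : LinearIndependent F t := by
    rw [linearIndependent_iff]
    intro l hl
    have h1 : (Submodule.Quotient.mk (∑ w ∈ l.support, l w • T w) : H ⧸ J) = 0 := by
      have h2 : (Submodule.Quotient.mk (∑ w ∈ l.support, l w • T w) : H ⧸ J) =
          ∑ w ∈ l.support, l w • t w := by
        rw [← Submodule.mkQ_apply, map_sum]
        apply Finset.sum_congr rfl
        intro w _
        rw [Submodule.mkQ_apply, hmkF]
      rw [h2, ← hl, Finsupp.linearCombination_apply, Finsupp.sum]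
    have hmem : (∑ w ∈ l.support, l w • T w) ∈ J := (Submodule.Quotient.mk_eq_zero J).mp h1
    have h3 : PHI (∑ w ∈ l.support, l w • T w) = l := by
      rw [map_sum]
      have h4 : ∀ w ∈ l.support, PHI (l w • T w) = Finsupp.single w (l w) := by
        intro w _
        rw [map_smul, hphiT, Finsupp.smul_single', mul_one]
      rw [Finset.sum_congr rfl h4]
      exact Finsupp.sum_single l
    rw [hphiJ _ hmem] at h3
    exact h3.symm
  have hspanT : ⊤ ≤ Submodule.span F (Set.range t) := by
    intro x hxtop
    clear hxtop
    obtain ⟨y, rfl⟩ := Submodule.Quotient.mk_surjective J x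
    have hy : y ∈ (⊤ : Submodule F H) := trivial
    rw [← Stmt15Aux.lemB cs act σ Z T hBL2 hBL4 hT1 hspan] at hy
    induction hy using Submodule.span_induction with
    | mem g hg =>
      obtain ⟨p, rfl⟩ := hg
      have hJmem : T p.2 * (Z p.1 - (τ p.1 : F) • 1) ∈ J := by
        rw [hJ]
        have h5 : (Z p.1 - (τ p.1 : F) • 1) ∈
            Submodule.span H {x : H | ∃ lam : Y, x = Z lam - (τ lam : F) • 1} :=
          Submodule.subset_span ⟨p.1, rfl⟩
        have h6 := Submodule.smul_mem _ (T p.2) h5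
        rwa [smul_eq_mul] at h6
      have h7 : (Submodule.Quotient.mk (T p.2 * Z p.1) : H ⧸ J) = (τ p.1 : F) • t p.2 := by
        rw [← hmkF]
        apply (Submodule.Quotient.eq J).mpr
        have : T p.2 * Z p.1 - (τ p.1 : F) • T p.2 = T p.2 * (Z p.1 - (τ p.1 : F) • 1) := by
          rw [mul_sub, mul_smul_comm, mul_one]
        rw [this]
        exact hJmem
      rw [h7]
      exact Submodule.smul_mem _ _ (Submodule.subset_span (Set.mem_range_self p.2))
    | zero =>
      rw [show (Submodule.Quotient.mk (0:H) : H ⧸ J) = 0 from rfl]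
      exact zero_mem _
    | add a b _ _ ha hb =>
      rw [show (Submodule.Quotient.mk (a + b) : H ⧸ J) =
        Submodule.Quotient.mk a + Submodule.Quotient.mk b from rfl]
      exact add_mem ha hb
    | smul c a _ ha =>
      rw [hmkF]
      exact Submodule.smul_mem _ _ ha
  set bT : Module.Basis W F (H ⧸ J) := Module.Basis.mk hindT hspanT with hbTdef
  have hbT : ∀ w : W, bT w = t w := fun w => Module.Basis.mk_apply _ _ _
  -- action of T_s on basis vectors
  have hact : ∀ (i : B) (w : W), T (cs.simple i) • t w =
      if cs.length (cs.simple i * w) = cs.length w + 1 then t (cs.simple i * w)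
      else ((σ i : F) - (↑(σ i)⁻¹ : F)) • t w + t (cs.simple i * w) := by
    intro i w
    have h1 : T (cs.simple i) • t w =
        (Submodule.Quotient.mk (T (cs.simple i) * T w) : H ⧸ J) := by
      rw [ht]
      rw [← smul_eq_mul]
      exact (Submodule.Quotient.mk_smul J _ _).symm
    rw [h1, hBL2 i w]
    by_cases hc : cs.length (cs.simple i * w) = cs.length w + 1
    · rw [if_pos hc, if_pos hc]
    · rw [if_neg hc, if_neg hc]
      rw [show (Submodule.Quotient.mk (((σ i : F) - (↑(σ i)⁻¹ : F)) • T w + T (cs.simple i * w))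
          : H ⧸ J) = Submodule.Quotient.mk (((σ i : F) - (↑(σ i)⁻¹ : F)) • T w) +
          Submodule.Quotient.mk (T (cs.simple i * w)) from rfl, hmkF]
  -- coordinates of the action on basis vectors
  have GV : ∀ (i : B) (w v : W), bT.repr (T (cs.simple i) • t w) v =
      (if cs.length (cs.simple i * w) = cs.length w + 1 then 0
        else (if w = v then ((σ i : F) - (↑(σ i)⁻¹ : F)) else 0)) +
      (if cs.simple i * w = v then (1:F) else 0) := by
    intro i w v
    rw [hact i w]
    by_cases hc : cs.length (cs.simple i * w) = cs.length w + 1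
    · rw [if_pos hc, if_pos hc, ← hbT, Module.Basis.repr_self, zero_add, Finsupp.single_apply]
    · rw [if_neg hc, if_neg hc, map_add, map_smul, ← hbT, ← hbT, Module.Basis.repr_self,
        Module.Basis.repr_self, Finsupp.add_apply, Finsupp.smul_apply, Finsupp.single_apply,
        Finsupp.single_apply, smul_eq_mul]
      by_cases h1 : w = v <;> simp [h1]
  -- evaluation of the action on arbitrary vectors
  have EVAL : ∀ (i : B) (x : H ⧸ J) (v : W), bT.repr (T (cs.simple i) • x) v =
      ∑ w ∈ (bT.repr x).support, bT.repr x w * bT.repr (T (cs.simple i) • t w) v := by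
    intro i x v
    have hx' : T (cs.simple i) • x =
        ∑ w ∈ (bT.repr x).support, bT.repr x w • (T (cs.simple i) • t w) := by
      conv_lhs => rw [← Module.Basis.linearCombination_repr bT x]
      rw [Finsupp.linearCombination_apply, Finsupp.sum, Finset.smul_sum]
      apply Finset.sum_congr rfl
      intro w hw
      rw [smul_comm, hbT]
    rw [hx', map_sum, Finsupp.finset_sum_apply]
    apply Finset.sum_congr rfl
    intro w hw
    rw [map_smul, Finsupp.smul_apply, smul_eq_mul]
  -- support bound
  have K1 : ∀ (i : B) (x : H ⧸ J) (v : W), bT.repr (T (cs.simple i) • x) v ≠ 0 →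
      ∃ w ∈ (bT.repr x).support, w = v ∨ cs.simple i * w = v := by
    intro i x v h
    by_contra hcon
    push_neg at hcon
    apply h
    rw [EVAL]
    apply Finset.sum_eq_zero
    intro w hw
    obtain ⟨h1, h2⟩ := hcon w hw
    rw [GV]
    simp [h1, h2]
  -- degree function
  set D : H ⧸ J → ℕ := fun x => (bT.repr x).support.sup cs.length with hD
  have hD0 : D 0 = 0 := by
    rw [hD]
    simp
  have hDadd : ∀ x y : H ⧸ J, D (x + y) ≤ max (D x) (D y) := by
    intro x y
    apply Finset.sup_le
    intro v hv
    rw [map_add] at hv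
    rcases Finset.mem_union.mp (Finsupp.support_add hv) with h | h
    · exact le_max_of_le_left (Finset.le_sup h)
    · exact le_max_of_le_right (Finset.le_sup h)
  have hDsmul : ∀ (c : F) (x : H ⧸ J), D (c • x) ≤ D x := by
    intro c x
    apply Finset.sup_le
    intro v hv
    rw [map_smul] at hv
    exact Finset.le_sup (Finsupp.support_smul hv)
  -- part 1
  have part1 : ∀ P : Submodule F (H ⧸ J), (∀ (w : W), ∀ x ∈ P, T w • x ∈ P) → P ≠ ⊥ →
      ¬ Module.Finite F P := by
    intro P hP hPne hPfin
    -- the step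
    have hstep : ∀ x ∈ P, x ≠ 0 → ∃ y ∈ P, y ≠ 0 ∧ D y = D x + 1 := by
      intro x hxP hxne
      have hrne : bT.repr x ≠ 0 := fun h => hxne (by
        have := congrArg bT.repr.symm h
        rwa [LinearEquiv.symm_apply_apply, map_zero] at this)
      obtain ⟨w₀, hw₀mem, hw₀⟩ := Finset.exists_mem_eq_sup _
        (Finsupp.support_nonempty_iff.mpr hrne) cs.length
      obtain ⟨i, hi⟩ := Stmt15Aux.exists_ascent cs w₀
      refine ⟨T (cs.simple i) • x, hP (cs.simple i) x hxP, ?_, ?_⟩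
      all_goals {
        have htop : bT.repr (T (cs.simple i) • x) (cs.simple i * w₀) = bT.repr x w₀ := by
          rw [EVAL]
          rw [Finset.sum_eq_single_of_mem w₀ hw₀mem]
          · rw [GV, if_pos hi, if_pos rfl, zero_add, mul_one]
          · intro w hw hne
            rw [GV]
            have h2 : ¬ (cs.simple i * w = cs.simple i * w₀) :=
              fun h => hne (mul_left_cancel h)
            have h3 : ¬ (w = cs.simple i * w₀) := by
              intro h
              have h4 : cs.length w ≤ cs.length w₀ := hw₀ ▸ Finset.le_sup hw
              rw [h, hi] at h4
              omega
            simp [h2, h3]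
        have hmem2 : (cs.simple i * w₀) ∈ (bT.repr (T (cs.simple i) • x)).support := by
          rw [Finsupp.mem_support_iff, htop]
          exact Finsupp.mem_support_iff.mp hw₀mem
        first
        | -- nonzero
          exact fun h => (by rw [h, map_zero] at hmem2; simp at hmem2 : False)
        | -- degree
          { have hle : D (T (cs.simple i) • x) ≤ D x + 1 := by
              apply Finset.sup_le
              intro v hv
              obtain ⟨w, hw, hcase⟩ := K1 i x v (Finsupp.mem_support_iff.mp hv)
              have hwle : cs.length w ≤ D x := Finset.le_sup hw
              rcases hcase with rfl | rfl
              · omega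
              · rcases cs.length_simple_mul w i with h | h <;> omega
            have hge : D x + 1 ≤ D (T (cs.simple i) • x) := by
              have h5 : cs.length (cs.simple i * w₀) ≤ D (T (cs.simple i) • x) :=
                Finset.le_sup hmem2
              rw [hi] at h5
              have h6 : D x = cs.length w₀ := hw₀
              omega
            omega }
      }
    -- iterate the step
    obtain ⟨x₀, hx₀P, hx₀ne⟩ := (Submodule.ne_bot_iff P).mp hPne
    have hchain : ∀ k : ℕ, ∃ y ∈ P, y ≠ 0 ∧ D y = D x₀ + k := by
      intro k
      induction k with
      | zero => exact ⟨x₀, hx₀P, hx₀ne, rfl⟩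
      | succ k ih =>
        obtain ⟨y, hyP, hyne, hyD⟩ := ih
        obtain ⟨z, hzP, hzne, hzD⟩ := hstep y hyP hyne
        exact ⟨z, hzP, hzne, by omega⟩
    -- bound from finiteness
    have hfg : P.FG := Module.Finite.iff_fg.mp hPfin
    obtain ⟨S, hS⟩ := hfg
    set N := S.sup D with hN
    have hbound : ∀ y ∈ P, D y ≤ N := by
      intro y hy
      rw [← hS] at hy
      induction hy using Submodule.span_induction with
      | mem z hz => exact Finset.le_sup hz
      | zero => rw [hD0]; omega
      | add a b _ _ ha hb =>
        have := hDadd a b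
        omega
      | smul c a _ ha =>
        have := hDsmul c a
        omega
    obtain ⟨y, hyP, _, hyD⟩ := hchain (N + 1)
    have := hbound y hyP
    omega
  refine ⟨part1, ?_⟩
  -- part 2
  intro V iV iMH iMF iTower hVfin hVnt f hinj
  set g : V →ₗ[F] (H ⧸ J) := f.restrictScalars F with hg
  set P : Submodule F (H ⧸ J) := LinearMap.range g with hPdef
  have hstable : ∀ (w : W), ∀ x ∈ P, T w • x ∈ P := by
    rintro w x ⟨v, rfl⟩
    exact ⟨T w • v, f.map_smul (T w) v⟩
  have hPne : P ≠ ⊥ := by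
    obtain ⟨v, hv⟩ := exists_ne (0 : V)
    apply Submodule.ne_bot_iff P |>.mpr
    refine ⟨g v, ⟨v, rfl⟩, ?_⟩
    intro h
    apply hv
    apply hinj
    rw [map_zero]
    exact h
  have hPfin : Module.Finite F P := Module.Finite.range g
  exact part1 P hstable hPne hPfin
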